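/- Let a be a negative semi-integer (2a ∈ ℤ, a < 0) and let P = (r, z, Δ_0, m) ∈ ℂ^{q+2n+1} be a point such that r_{ij} ≠ 0 for all 1 ≤ i < j ≤ n, g^a_{ij}(P) = r_{ij}^{−2a}(z_i z_j + 1) − 1 = 0 for all 1 ≤ i < j ≤ n, and Ψ^a_{i_0}(P) ≠ 0 for some index i_0. Then the (q+1) × (q+n) Jacobian matrix of the polynomials (g^a_{ij})_{1≤i<j≤n} and F with respect to the variables (R_{kl})_{1≤k<l≤n}, Z_1, …, Z_n, evaluated at P, has maximal rank q+1; in particular it possesses a nonsingular square submatrix of order q+1. -/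

import Mathlib

/-- Index type for the mutual-distance variables `R_{ij}`, `1 ≤ i < j ≤ n`. -/
abbrev PairIdx (n : ℕ) := {p : Fin n × Fin n // p.1 < p.2}

/-- The polynomial `R_{ij}` (for an unordered pair `{i,j}`; junk value `0` if `i = j`). -/
noncomputable def Rvar {n : ℕ} (i j : Fin n) : MvPolynomial (PairIdx n) ℂ :=
  if h : i < j then MvPolynomial.X ⟨(i, j), h⟩
  else if h' : j < i then MvPolynomial.X ⟨(j, i), h'⟩ else 0

/-- The polynomial Cayley–Menger matrix `A(R)` over `ℂ[R_{12}, …, R_{(n−1)n}]`. -/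
noncomputable def cmPolyMatrix (n : ℕ) :
    Matrix (Fin (n + 1)) (Fin (n + 1)) (MvPolynomial (PairIdx n) ℂ) :=
  Matrix.of fun i j =>
    Fin.cases (Fin.cases 0 (fun _ => 1) j)
      (fun i' => Fin.cases 1 (fun j' => Rvar i' j' ^ 2) j) i

/-- The Cayley–Menger determinant polynomial `F = det A(R)`. -/
noncomputable def Fpoly (n : ℕ) : MvPolynomial (PairIdx n) ℂ := (cmPolyMatrix n).det

/-- `∂F/∂R_{ij}` for an unordered pair `{i,j}` (junk value `0` if `i = j`). -/
noncomputable def dF {n : ℕ} (i j : Fin n) : MvPolynomial (PairIdx n) ℂ :=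
  if h : i < j then MvPolynomial.pderiv (⟨(i, j), h⟩ : PairIdx n) (Fpoly n)
  else if h' : j < i then MvPolynomial.pderiv (⟨(j, i), h'⟩ : PairIdx n) (Fpoly n) else 0

/-- `(∂F/∂R_{ij})` evaluated at `r`. -/
noncomputable def evalDF {n : ℕ} (r : PairIdx n → ℂ) (i j : Fin n) : ℂ :=
  MvPolynomial.eval r (dF i j)

/-- `r_{ij}` as a symmetric function of the coordinates indexed by ordered pairs. -/
noncomputable def rC {n : ℕ} (r : PairIdx n → ℂ) (i j : Fin n) : ℂ :=
  if h : i < j then r ⟨(i, j), h⟩ else if h' : j < i then r ⟨(j, i), h'⟩ else 0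

/-- The numeric Cayley–Menger matrix `A(r²)` of the numbers `r_{ij}`. -/
noncomputable def cmOf {n : ℕ} (r : PairIdx n → ℂ) :
    Matrix (Fin (n + 1)) (Fin (n + 1)) ℂ :=
  Matrix.of fun i j =>
    Fin.cases (Fin.cases 0 (fun _ => 1) j)
      (fun i' => Fin.cases 1 (fun j' => rC r i' j' ^ 2) j) i

/-- `Ψ^a_i` evaluated at a point (with `c2 = 2a`): for `a < 0`,
`∑_{j≠i} r_{ij}^{−2a+1} (∂F/∂R_{ij})(r) z_j`; for `a > 0`,
`∑_{j≠i} (∏_{(k,l)≠(i,j)} r_{kl}^{2a−1}) (∂F/∂R_{ij})(r) z_j`. -/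
noncomputable def Psi {n : ℕ} (c2 : ℤ) (r : PairIdx n → ℂ) (z : Fin n → ℂ) (i : Fin n) : ℂ :=
  if c2 < 0 then
    ∑ j ∈ Finset.univ \ {i}, rC r i j ^ (1 - c2).toNat * evalDF r i j * z j
  else
    ∑ j ∈ Finset.univ \ {i},
      (∏ p ∈ Finset.univ.filter
          (fun p : PairIdx n => ¬((p.1.1 = i ∧ p.1.2 = j) ∨ (p.1.1 = j ∧ p.1.2 = i))),
        r p ^ (c2 - 1).toNat) * evalDF r i j * z j

/-- The coordinates of the affine space `ℂ^{q+2n+1}`: `R`-coordinates, `Z`-coordinates,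
the coordinate `Δ`, and `M`-coordinates. -/
abbrev TVar (n : ℕ) := PairIdx n ⊕ (Fin n ⊕ (Unit ⊕ Fin n))

/-- A point of `ℂ^{q+2n+1}`. -/
abbrev Pt (n : ℕ) := TVar n → ℂ

def rPart {n : ℕ} (P : Pt n) : PairIdx n → ℂ := fun p => P (Sum.inl p)
def zPart {n : ℕ} (P : Pt n) : Fin n → ℂ := fun i => P (Sum.inr (Sum.inl i))
def dPart {n : ℕ} (P : Pt n) : ℂ := P (Sum.inr (Sum.inr (Sum.inl ())))
def mPart {n : ℕ} (P : Pt n) : Fin n → ℂ := fun i => P (Sum.inr (Sum.inr (Sum.inr i)))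

/-- `g^a_{ij}` evaluated at a point: `R_{ij}^{2a} − 1 − Z_i Z_j` if `a > 0`, and
`R_{ij}^{−2a}(Z_i Z_j + 1) − 1` if `a < 0` (with `c2 = 2a`). -/
noncomputable def gEval {n : ℕ} (c2 : ℤ) (P : Pt n) (p : PairIdx n) : ℂ :=
  if 0 < c2 then rPart P p ^ c2.toNat - 1 - zPart P p.1.1 * zPart P p.1.2
  else rPart P p ^ (-c2).toNat * (zPart P p.1.1 * zPart P p.1.2 + 1) - 1

/-- `Γ_l` evaluated at a point: `Γ_0 = ∑ M_j Z_j` and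
`Γ_l = Δ + ∑ M_j Z_j R_{jl}²` for `l = 1, …, n`. -/
noncomputable def GammaEval {n : ℕ} (P : Pt n) (l : Fin (n + 1)) : ℂ :=
  Fin.cases (∑ j, mPart P j * zPart P j)
    (fun l' => dPart P + ∑ j, mPart P j * zPart P j * rC (rPart P) j l' ^ 2) l

/-- The algebraic set `Ṽ^a`: common zero set of the `g^a_{ij}`, `F`, and the `Γ_l`. -/
noncomputable def Vtilde (n : ℕ) (c2 : ℤ) : Set (Pt n) :=
  {P | (∀ p, gEval c2 P p = 0) ∧ (cmOf (rPart P)).det = 0 ∧ ∀ l, GammaEval P l = 0}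

/-- `W_1 = {∏_{i<j} R_{ij} = 0}`. -/
noncomputable def W1 (n : ℕ) : Set (Pt n) := {P | ∏ p, rPart P p = 0}

/-- `W_2 = {F_{ij} = 0 for all 0 ≤ i, j ≤ n}` (the `(i,j)` cofactor of the Cayley–Menger
matrix is the `(j,i)` entry of its adjugate). -/
noncomputable def W2 (n : ℕ) : Set (Pt n) :=
  {P | ∀ i j : Fin (n + 1), (cmOf (rPart P)).adjugate j i = 0}

/-- `W_3^a = {Ψ^a_1 = ⋯ = Ψ^a_n = 0}`. -/
noncomputable def W3 (n : ℕ) (c2 : ℤ) : Set (Pt n) :=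
  {P | ∀ i, Psi c2 (rPart P) (zPart P) i = 0}

/-- The quasi-affine set `V^a = Ṽ^a \ (W_1 ∪ W_2 ∪ W_3^a)`. -/
noncomputable def Vset (n : ℕ) (c2 : ℤ) : Set (Pt n) :=
  Vtilde n c2 \ (W1 n ∪ W2 n ∪ W3 n c2)

/-- Variables for the Jacobian of Statement 12: the `R_{ij}` and the `Z_i`. -/
abbrev JVar (n : ℕ) := PairIdx n ⊕ Fin n

/-- The polynomial `g^a_{ij} = R_{ij}^{−2a}(Z_i Z_j + 1) − 1` (case `a < 0`, `c2 = 2a`),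
as a polynomial in the variables `R_{kl}, Z_1, …, Z_n`. -/
noncomputable def gPolyJ {n : ℕ} (c2 : ℤ) (p : PairIdx n) : MvPolynomial (JVar n) ℂ :=
  MvPolynomial.X (Sum.inl p) ^ (-c2).toNat *
    (MvPolynomial.X (Sum.inr p.1.1) * MvPolynomial.X (Sum.inr p.1.2) + 1) - 1

/-- `F` regarded as a polynomial in the variables `R_{kl}, Z_1, …, Z_n`. -/
noncomputable def FpolyJ (n : ℕ) : MvPolynomial (JVar n) ℂ :=
  MvPolynomial.rename Sum.inl (Fpoly n)

/-- The Jacobian matrix of the polynomials `(g^a_{ij})_{i<j}` and `F` with respect to the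
variables `(R_{kl})_{k<l}, Z_1, …, Z_n`, evaluated at a point `P`. -/
noncomputable def jacMat {n : ℕ} (c2 : ℤ) (P : JVar n → ℂ) :
    Matrix (PairIdx n ⊕ Unit) (JVar n) ℂ :=
  Matrix.of fun row v =>
    MvPolynomial.eval P
      (MvPolynomial.pderiv v (Sum.elim (fun p => gPolyJ c2 p) (fun _ => FpolyJ n) row))
open MvPolynomial in
lemma jac_g_R {n : ℕ} (c2 : ℤ) (r : PairIdx n → ℂ) (z : Fin n → ℂ) (p p' : PairIdx n) :
    jacMat c2 (Sum.elim r z) (Sum.inl p) (Sum.inl p') =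
      if p' = p then ((-c2).toNat : ℂ) * r p ^ ((-c2).toNat - 1) * (z p.1.1 * z p.1.2 + 1)
      else 0 := by
  simp only [jacMat, Matrix.of_apply, Sum.elim_inl, gPolyJ]
  rw [map_sub, pderiv_mul, pderiv_pow]
  by_cases h : p' = p
  · subst h
    simp [pderiv_X_self, pderiv_X_of_ne (by simp : (Sum.inr p'.1.1 : JVar n) ≠ Sum.inl p'),
      pderiv_X_of_ne (by simp : (Sum.inr p'.1.2 : JVar n) ≠ Sum.inl p')]

  · simp [pderiv_X_of_ne (by simpa using Ne.symm h : (Sum.inl p : JVar n) ≠ Sum.inl p'),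
      pderiv_X_of_ne (by simp : (Sum.inr p.1.1 : JVar n) ≠ Sum.inl p'),
      pderiv_X_of_ne (by simp : (Sum.inr p.1.2 : JVar n) ≠ Sum.inl p'), h]
open MvPolynomial in
lemma jac_g_Z {n : ℕ} (c2 : ℤ) (r : PairIdx n → ℂ) (z : Fin n → ℂ) (p : PairIdx n) (m : Fin n) :
    jacMat c2 (Sum.elim r z) (Sum.inl p) (Sum.inr m) =
      r p ^ (-c2).toNat *
        ((if p.1.1 = m then z p.1.2 else 0) + (if p.1.2 = m then z p.1.1 else 0)) := by
  simp only [jacMat, Matrix.of_apply, Sum.elim_inl, gPolyJ]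
  rw [map_sub, pderiv_mul, pderiv_pow]
  rw [pderiv_X_of_ne (by simp : (Sum.inl p : JVar n) ≠ Sum.inr m)]
  simp only [map_add, pderiv_mul, pderiv_X, map_one, Derivation.map_one_eq_zero]
  simp only [Pi.single_apply, Sum.inr.injEq]
  by_cases h1 : p.1.1 = m <;> by_cases h2 : p.1.2 = m <;> simp [h1, h2] <;> ring
open MvPolynomial in
lemma jac_F_R {n : ℕ} (c2 : ℤ) (r : PairIdx n → ℂ) (z : Fin n → ℂ) (p' : PairIdx n) :
    jacMat c2 (Sum.elim r z) (Sum.inr ()) (Sum.inl p') =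
      MvPolynomial.eval r (MvPolynomial.pderiv p' (Fpoly n)) := by
  simp only [jacMat, Matrix.of_apply, Sum.elim_inr, FpolyJ]
  rw [pderiv_rename Sum.inl_injective, eval_rename]
  congr 1

open MvPolynomial in
lemma jac_F_Z {n : ℕ} (c2 : ℤ) (r : PairIdx n → ℂ) (z : Fin n → ℂ) (m : Fin n) :
    jacMat c2 (Sum.elim r z) (Sum.inr ()) (Sum.inr m) = 0 := by
  simp only [jacMat, Matrix.of_apply, Sum.elim_inr, FpolyJ]
  rw [pderiv_eq_zero_of_notMem_vars, map_zero]
  intro h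
  have := vars_rename (R := ℂ) Sum.inl (Fpoly n) h
  simp at this
def pairEquivSigma (n : ℕ) : PairIdx n ≃ Σ j : Fin n, Fin j.val where
  toFun p := ⟨p.1.2, ⟨p.1.1.val, p.2⟩⟩
  invFun x := ⟨(⟨x.2.val, lt_trans x.2.isLt x.1.isLt⟩, x.1), x.2.isLt⟩
  left_inv := by rintro ⟨⟨i, j⟩, h⟩; rfl
  right_inv := by rintro ⟨j, k⟩; rfl

lemma card_pairIdx (n : ℕ) : Fintype.card (PairIdx n) = n * (n - 1) / 2 := by
  rw [Fintype.card_congr (pairEquivSigma n), Fintype.card_sigma]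
  simp only [Fintype.card_fin]
  rw [show (∑ x : Fin n, (x : ℕ)) = ∑ i ∈ Finset.range n, i from
    Fin.sum_univ_eq_sum_range (fun i => i) n]
  have h2 := Finset.sum_range_id_mul_two n
  omega

lemma rank_submatrix_cols_le {m l o : Type*} [Fintype m] [Fintype l] [Fintype o]
    [DecidableEq o]
    (A : Matrix m o ℂ) (g : l → o) (hg : Function.Injective g) :
    (A.submatrix id g).rank ≤ A.rank := by
  classical
  rw [Matrix.rank, Matrix.rank]
  apply Submodule.finrank_mono
  rintro x ⟨v, rfl⟩
  refine ⟨Function.extend g v 0, ?_⟩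
  ext i
  simp only [Matrix.mulVecLin_apply, Matrix.mulVec, dotProduct,
    Matrix.submatrix_apply, id]
  have h1 : ∑ x : o, A i x * Function.extend g v 0 x
      = ∑ x ∈ Finset.univ.image g, A i x * Function.extend g v 0 x := by
    refine (Finset.sum_subset (Finset.subset_univ _) ?_).symm
    intro c _ hc
    rw [Function.extend_apply' _ _ _
      (fun ⟨j, hj⟩ => hc (hj ▸ Finset.mem_image_of_mem g (Finset.mem_univ j))),
      Pi.zero_apply, mul_zero]
  rw [h1, Finset.sum_image (fun a _ b _ hab => hg hab)]
  exact Finset.sum_congr rfl fun j _ => by rw [hg.extend_apply]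
def pairOf {n : ℕ} (i j : Fin n) (h : i ≠ j) : PairIdx n :=
  if h' : i < j then ⟨(i, j), h'⟩ else ⟨(j, i), h.lt_or_gt.resolve_left h'⟩

lemma key_sum {n : ℕ} (c2 : ℤ) (hc2 : c2 < 0) (r : PairIdx n → ℂ) (z : Fin n → ℂ)
    (hr : ∀ p, r p ≠ 0) (d : PairIdx n → ℂ)
    (hd : ∀ p, d p * r p = ((-c2).toNat : ℂ)) (hdne : ∀ p, d p ≠ 0) (i0 : Fin n) :
    (((-c2).toNat : ℕ) : ℂ) *
      ∑ p : PairIdx n, MvPolynomial.eval r (MvPolynomial.pderiv p (Fpoly n)) * (d p)⁻¹ *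
        (r p ^ (-c2).toNat *
          ((if p.1.1 = i0 then z p.1.2 else 0) + (if p.1.2 = i0 then z p.1.1 else 0))) =
      Psi c2 r z i0 := by
  set k := (-c2).toNat with hkdef
  have hk1 : 1 ≤ k := by omega
  have hkC : (k : ℂ) ≠ 0 := Nat.cast_ne_zero.mpr (by omega)
  have hrp : ∀ p : PairIdx n, (k : ℂ) * (d p)⁻¹ = r p := by
    intro p
    rw [← hd p, mul_comm (d p) (r p), mul_assoc, mul_inv_cancel₀ (hdne p), mul_one]
  rw [Psi, if_pos hc2]
  have hexp : (1 - c2).toNat = k + 1 := by omega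
  rw [Finset.mul_sum]
  rw [show (Finset.univ : Finset (PairIdx n)) =
    Finset.univ.filter (fun p : PairIdx n => p.1.1 = i0 ∨ p.1.2 = i0) ∪
    Finset.univ.filter (fun p : PairIdx n => ¬(p.1.1 = i0 ∨ p.1.2 = i0)) from
    (Finset.filter_union_filter_not_eq _ _).symm]
  rw [Finset.sum_union (Finset.disjoint_filter_filter_not _ _ _)]
  have h0 : ∑ p ∈ Finset.univ.filter (fun p : PairIdx n => ¬((p.1.1 = i0 ∨ p.1.2 = i0))),
      ((k : ℕ) : ℂ) * (MvPolynomial.eval r (MvPolynomial.pderiv p (Fpoly n)) * (d p)⁻¹ *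
        (r p ^ k *
          ((if p.1.1 = i0 then z p.1.2 else 0) + (if p.1.2 = i0 then z p.1.1 else 0)))) = 0 := by
    refine Finset.sum_eq_zero fun p hp => ?_
    rcases Finset.mem_filter.mp hp with ⟨-, hnp⟩
    push_neg at hnp
    simp [hnp.1, hnp.2]
  rw [h0, add_zero]
  refine Finset.sum_bij' (i := fun p _ => if p.1.1 = i0 then p.1.2 else p.1.1)
    (j := fun j hj => pairOf i0 j
      (fun h => by simp [Finset.mem_sdiff, ← h] at hj))
    ?_ ?_ ?_ ?_ ?_
  · intro p hp
    rcases Finset.mem_filter.mp hp with ⟨-, h | h⟩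
    · rw [if_pos h]
      simp only [Finset.mem_sdiff, Finset.mem_univ, Finset.mem_singleton, true_and]
      exact fun hc => absurd (h ▸ hc ▸ p.2) (lt_irrefl _)
    · have h1 : p.1.1 ≠ i0 := fun hc => absurd (h ▸ hc ▸ p.2) (lt_irrefl _)
      rw [if_neg h1]
      simp only [Finset.mem_sdiff, Finset.mem_univ, Finset.mem_singleton, true_and]
      exact h1
  · intro j hj
    unfold pairOf
    split <;> simp
  · intro p hp
    rcases Finset.mem_filter.mp hp with ⟨-, h | h⟩
    · simp only [if_pos h]
      unfold pairOf
      rw [dif_pos (h ▸ p.2)]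
      exact Subtype.ext (Prod.ext_iff.mpr ⟨h.symm, rfl⟩)
    · have h1 : p.1.1 ≠ i0 := fun hc => absurd (h ▸ hc ▸ p.2) (lt_irrefl _)
      simp only [if_neg h1]
      unfold pairOf
      rw [dif_neg (asymm (h ▸ p.2))]
      exact Subtype.ext (Prod.ext_iff.mpr ⟨rfl, h.symm⟩)
  · intro j hj
    have hji : j ≠ i0 := by simpa [Finset.mem_sdiff] using hj
    unfold pairOf
    split <;> simp [Ne.symm hji]
  · intro p hp
    rcases Finset.mem_filter.mp hp with ⟨-, h | h⟩
    · have hlt : i0 < p.1.2 := h ▸ p.2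
      have hne2 : p.1.2 ≠ i0 := ne_of_gt hlt
      have hpe : (⟨(i0, p.1.2), hlt⟩ : PairIdx n) = p :=
        Subtype.ext (Prod.ext_iff.mpr ⟨h.symm, rfl⟩)
      rw [if_pos h, if_pos h, if_neg hne2, add_zero, rC, dif_pos hlt, evalDF, dF,
        dif_pos hlt, hpe, hexp, pow_succ, ← hrp p]
      ring
    · have h1 : p.1.1 ≠ i0 := fun hc => absurd (h ▸ hc ▸ p.2) (lt_irrefl _)
      have hlt : p.1.1 < i0 := h ▸ p.2
      have hpe : (⟨(p.1.1, i0), hlt⟩ : PairIdx n) = p :=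
        Subtype.ext (Prod.ext_iff.mpr ⟨rfl, h.symm⟩)
      rw [if_neg h1, if_neg h1, if_pos h, zero_add, rC, dif_neg (asymm hlt), dif_pos hlt,
        evalDF, dF, dif_neg (asymm hlt), dif_pos hlt, hpe, hexp, pow_succ, ← hrp p]
      ring
lemma det_sub_ne {n : ℕ} (c2 : ℤ) (hc2 : c2 < 0) (r : PairIdx n → ℂ) (z : Fin n → ℂ)
    (hr : ∀ p, r p ≠ 0)
    (hg : ∀ p : PairIdx n, r p ^ (-c2).toNat * (z p.1.1 * z p.1.2 + 1) - 1 = 0)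
    (i0 : Fin n) (hi0 : Psi c2 r z i0 ≠ 0) :
    ((jacMat c2 (Sum.elim r z)).submatrix id
      (Sum.elim Sum.inl (fun _ : Unit => Sum.inr i0))).det ≠ 0 := by
  classical
  set k := (-c2).toNat with hkdef
  have hk1 : 1 ≤ k := by omega
  have hkC : (k : ℂ) ≠ 0 := Nat.cast_ne_zero.mpr (by omega)
  set d : PairIdx n → ℂ := fun p => (k : ℂ) * r p ^ (k - 1) * (z p.1.1 * z p.1.2 + 1)
    with hddef
  have hg1 : ∀ p : PairIdx n, r p ^ k * (z p.1.1 * z p.1.2 + 1) = 1 :=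
    fun p => sub_eq_zero.mp (hg p)
  have hd : ∀ p, d p * r p = (k : ℂ) := by
    intro p
    have hpow : r p ^ (k - 1) * r p = r p ^ k := by
      rw [← pow_succ]; congr 1; omega
    calc d p * r p = (k : ℂ) * (r p ^ (k - 1) * r p) * (z p.1.1 * z p.1.2 + 1) := by ring
      _ = (k : ℂ) * (r p ^ k * (z p.1.1 * z p.1.2 + 1)) := by rw [hpow]; ring
      _ = (k : ℂ) := by rw [hg1 p]; ring
  have hdne : ∀ p, d p ≠ 0 := fun p h => hkC (by rw [← hd p, h, zero_mul])
  set B : Matrix (PairIdx n) Unit ℂ := fun p _ =>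
    r p ^ k * ((if p.1.1 = i0 then z p.1.2 else 0) + (if p.1.2 = i0 then z p.1.1 else 0))
    with hB
  set C : Matrix Unit (PairIdx n) ℂ := fun _ p =>
    MvPolynomial.eval r (MvPolynomial.pderiv p (Fpoly n)) with hC
  have hN : (jacMat c2 (Sum.elim r z)).submatrix id (Sum.elim Sum.inl fun _ => Sum.inr i0)
      = Matrix.fromBlocks (Matrix.diagonal d) B C 0 := by
    ext i j
    rcases i with p | u <;> rcases j with p' | u'
    · simp only [Matrix.submatrix_apply, id, Sum.elim_inl, Matrix.fromBlocks_apply₁₁]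
      rw [jac_g_R, Matrix.diagonal_apply]
      exact if_congr eq_comm rfl rfl
    · simp only [Matrix.submatrix_apply, id, Sum.elim_inr, Matrix.fromBlocks_apply₁₂]
      rw [jac_g_Z]
    · simp only [Matrix.submatrix_apply, id, Sum.elim_inl, Matrix.fromBlocks_apply₂₁]
      rw [jac_F_R]
    · simp only [Matrix.submatrix_apply, id, Sum.elim_inr, Matrix.fromBlocks_apply₂₂]
      rw [jac_F_Z]; rfl
  rw [hN]
  letI : Invertible d :=
    ⟨fun p => (d p)⁻¹, funext fun p => inv_mul_cancel₀ (hdne p),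
      funext fun p => mul_inv_cancel₀ (hdne p)⟩
  letI : Invertible (Matrix.diagonal d) := Matrix.diagonalInvertible d
  rw [Matrix.det_fromBlocks₁₁, Matrix.invOf_diagonal_eq, Matrix.det_diagonal]
  refine mul_ne_zero (Finset.prod_ne_zero_iff.mpr fun p _ => hdne p) ?_
  rw [Matrix.det_unique]
  have hentry : ((0 : Matrix Unit Unit ℂ) - C * Matrix.diagonal (⅟d) * B) default default =
      -∑ p : PairIdx n, MvPolynomial.eval r (MvPolynomial.pderiv p (Fpoly n)) * (d p)⁻¹ *
        (r p ^ k *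
          ((if p.1.1 = i0 then z p.1.2 else 0) + (if p.1.2 = i0 then z p.1.1 else 0))) := by
    simp only [Matrix.sub_apply, Matrix.zero_apply, Matrix.mul_apply, Matrix.mul_diagonal,
      Finset.univ_unique, Finset.sum_singleton, zero_sub, neg_inj]
    refine Finset.sum_congr rfl fun p _ => ?_
    have hrow : (∑ j : PairIdx n, C default j * Matrix.diagonal (⅟d) j p)
        = C default p * (d p)⁻¹ := by
      rw [Finset.sum_eq_single p]
      · rw [Matrix.diagonal_apply_eq]; rfl
      · intro b _ hb; rw [Matrix.diagonal_apply_ne _ hb, mul_zero]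
      · intro h; exact absurd (Finset.mem_univ p) h
    rw [hrow, hC, hB]
  rw [hentry, neg_ne_zero]
  intro hS
  apply hi0
  rw [← key_sum c2 hc2 r z hr d hd hdne i0, ← hkdef, hS, mul_zero]

/-- Let `a < 0` be a semi-integer (`c2 = 2a`), and let
`P = (r, z, Δ_0, m)` be a point with all `r_{ij} ≠ 0`, `g^a_{ij}(P) = 0` for all `i < j`,
and `Ψ^a_{i_0}(P) ≠ 0` for some `i_0`. Then the Jacobian matrix of the `g^a_{ij}` and `F`
with respect to the `R`- and `Z`-variables at `P` has maximal rank `q + 1`; in particular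
it has a nonsingular square submatrix of order `q + 1`. -/
theorem statement12 {n : ℕ} (hn : 3 ≤ n) (c2 : ℤ) (hc2 : c2 < 0)
    (r : PairIdx n → ℂ) (z : Fin n → ℂ)
    (hr : ∀ p, r p ≠ 0)
    (hg : ∀ p : PairIdx n, r p ^ (-c2).toNat * (z p.1.1 * z p.1.2 + 1) - 1 = 0)
    (hΨ : ∃ i : Fin n, Psi c2 r z i ≠ 0) :
    (jacMat c2 (Sum.elim r z)).rank = n * (n - 1) / 2 + 1 ∧
    ∃ (e : Fin (n * (n - 1) / 2 + 1) → PairIdx n ⊕ Unit)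
      (f : Fin (n * (n - 1) / 2 + 1) → JVar n),
      Function.Injective e ∧ Function.Injective f ∧
      ((jacMat c2 (Sum.elim r z)).submatrix e f).det ≠ 0 := by
  classical
  obtain ⟨i0, hi0⟩ := hΨ
  have hdet := det_sub_ne c2 hc2 r z hr hg i0 hi0
  set A := jacMat c2 (Sum.elim r z) with hA
  set cmap : PairIdx n ⊕ Unit → JVar n := Sum.elim Sum.inl (fun _ => Sum.inr i0) with hcm
  have hcmap : Function.Injective cmap := by
    rintro (p | u) (p' | u') h
    · exact congrArg Sum.inl (by simpa [hcm] using h)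
    · simp [hcm] at h
    · simp [hcm] at h
    · rfl
  have hcard : Fintype.card (PairIdx n ⊕ Unit) = n * (n - 1) / 2 + 1 := by
    simp [card_pairIdx]
  have hNunit : IsUnit (A.submatrix id cmap) :=
    (Matrix.isUnit_iff_isUnit_det _).mpr (isUnit_iff_ne_zero.mpr hdet)
  have hrankN : (A.submatrix id cmap).rank = n * (n - 1) / 2 + 1 := by
    rw [Matrix.rank_of_isUnit _ hNunit, hcard]
  have hrank : A.rank = n * (n - 1) / 2 + 1 := by
    refine le_antisymm ?_ ?_
    · exact hcard ▸ Matrix.rank_le_card_height A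
    · rw [← hrankN]; exact rank_submatrix_cols_le A cmap hcmap
  refine ⟨hrank, ?_⟩
  have hne : Nonempty (Fin (n * (n - 1) / 2 + 1) ≃ (PairIdx n ⊕ Unit)) := by
    apply Fintype.card_eq.mp; rw [hcard, Fintype.card_fin]
  obtain ⟨ε⟩ := hne
  refine ⟨ε, cmap ∘ ε, ε.injective, hcmap.comp ε.injective, ?_⟩
  have hsub : A.submatrix ε (cmap ∘ ε) = (A.submatrix id cmap).submatrix ε ε := rfl
  rw [hsub, Matrix.det_submatrix_equiv_self]
  exact hdet
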